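/- Let all parameters be positive reals with ε ∈ (0,1), L = log₂(1/ε), and suppose D := d·m₀·n₀² + 2κLω − 2L·m₀·n₀·ω ≤ 0. Then the network-only cost C_N is strictly decreasing on (0,∞); consequently its minimum over the interval [1, m₀] is attained at γ = m₀ and nowhere else. -/
import Mathlib


open Real Set Filter

theorem stmt5 (m₀ n₀ d κ ω θ ε L : ℝ)
    (hm : 1 < m₀) (hn : 0 < n₀) (hd : 0 < d) (hκ : 0 < κ) (hω : 0 < ω) (hθ : 0 < θ)
    (hε : 0 < ε) (hε1 : ε < 1) (hL : L = Real.logb 2 (1/ε))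
    (C_N : ℝ → ℝ)
    (hC : C_N = fun γ => 2*ω*θ*(m₀/γ - 1)*((1 + κ/(n₀*γ))*L) + θ*(m₀ - m₀/γ)*n₀*d)
    (hD : d*m₀*n₀^2 + 2*κ*L*ω - 2*L*m₀*n₀*ω ≤ 0) :
    StrictAntiOn C_N (Set.Ioi 0) ∧
    ∀ γ ∈ Set.Icc (1:ℝ) m₀, γ ≠ m₀ → C_N m₀ < C_N γ := by
  have hLpos : 0 < L := by
    rw [hL]
    apply Real.logb_pos one_lt_two
    rw [lt_div_iff₀ hε]; linarith
  have expand : ∀ z : ℝ, 0 < z →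
      C_N z = (-2*ω*θ*L + θ*m₀*n₀*d)
        + (θ*(-(d*m₀*n₀^2 + 2*κ*L*ω - 2*L*m₀*n₀*ω))/n₀) * (1/z)
        + (2*ω*θ*L*m₀*κ/n₀) * (1/z)^2 := by
    intro z hz
    rw [hC]
    field_simp
    ring
  have key : StrictAntiOn C_N (Set.Ioi 0) := by
    intro x hx y hy hxy
    have hx0 : (0:ℝ) < x := hx
    have hy0 : (0:ℝ) < y := hy
    rw [expand x hx0, expand y hy0]
    have hB : 0 ≤ θ*(-(d*m₀*n₀^2 + 2*κ*L*ω - 2*L*m₀*n₀*ω))/n₀ := by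
      apply div_nonneg _ hn.le
      have : 0 ≤ -(d*m₀*n₀^2 + 2*κ*L*ω - 2*L*m₀*n₀*ω) := by linarith
      positivity
    have hCpos : 0 < 2*ω*θ*L*m₀*κ/n₀ := by
      apply div_pos _ hn
      have hm0 : 0 < m₀ := by linarith
      positivity
    have hinv : 1/y < 1/x := by
      apply one_div_lt_one_div_of_lt hx0 hxy
    have hiy : 0 < 1/y := by positivity
    nlinarith [mul_le_mul_of_nonneg_left hinv.le hB, sq_nonneg (1/x - 1/y),
      mul_pos hiy (sub_pos.mpr hinv)]
  refine ⟨key, fun γ hγ hne => ?_⟩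
  have hγ1 : (1:ℝ) ≤ γ := hγ.1
  have hγm : γ < m₀ := lt_of_le_of_ne hγ.2 hne
  exact key (by simp; linarith) (by simp; linarith) hγm
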